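/- For every z ∈ ℂ with 0 < |z| < 1, ∏_{j=1}^n (z^{P/p_j} − z^{−P/p_j}) / (z^P − z^{−P})^{n−2} = Σ_{r=0}^∞ Σ_{ε ∈ {±1}^n} (−1)^n · binom(r + n − 3, r) · (∏_{j=1}^n ε_j) · z^{2Pr + P(n−2) + Σ_{j=1}^n ε_j P/p_j}, where each inner sum over ε is finite and the outer series over r converges absolutely (the denominator z^P − z^{−P} is nonzero for 0 < |z| < 1). -/

import Mathlib

open scoped BigOperators

theorem statement12 (n : ℕ) (hn : 3 ≤ n) (p : Fin n → ℤ)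
    (hp2 : ∀ j, 2 ≤ p j)
    (hpcop : ∀ i j : Fin n, i ≠ j → IsCoprime (p i) (p j))
    (z : ℂ) (hz0 : z ≠ 0) (hz1 : ‖z‖ < 1) :
    z ^ (∏ j, p j) - z ^ (-∏ j, p j) ≠ 0 ∧
    Summable (fun r : ℕ =>
      ‖∑ ε : Fin n → Bool,
        (-1 : ℂ) ^ n * ((r + (n - 3)).choose r : ℂ) *
          (∏ j, if ε j then (1 : ℂ) else -1) *
          z ^ (2 * (∏ j, p j) * (r : ℤ) + (∏ j, p j) * ((n : ℤ) - 2) +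
            ∑ j, (if ε j then (1 : ℤ) else -1) * ∏ i ∈ Finset.univ.erase j, p i)‖) ∧
    HasSum (fun r : ℕ =>
      ∑ ε : Fin n → Bool,
        (-1 : ℂ) ^ n * ((r + (n - 3)).choose r : ℂ) *
          (∏ j, if ε j then (1 : ℂ) else -1) *
          z ^ (2 * (∏ j, p j) * (r : ℤ) + (∏ j, p j) * ((n : ℤ) - 2) +
            ∑ j, (if ε j then (1 : ℤ) else -1) * ∏ i ∈ Finset.univ.erase j, p i))
      ((∏ j, (z ^ (∏ i ∈ Finset.univ.erase j, p i) - z ^ (-∏ i ∈ Finset.univ.erase j, p i))) /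
        (z ^ (∏ j, p j) - z ^ (-∏ j, p j)) ^ (n - 2)) := by
  classical
  set P : ℤ := ∏ j, p j with hPdef
  have hPpos : 0 < P := Finset.prod_pos (fun j _ => lt_of_lt_of_le two_pos (hp2 j))
  set w : ℂ := z ^ (2 * P) with hwdef
  have h2P : ((2 * P).toNat : ℤ) = 2 * P := Int.toNat_of_nonneg (by positivity)
  have hw1 : ‖w‖ < 1 := by
    rw [hwdef, ← h2P, zpow_natCast, norm_pow]
    exact pow_lt_one₀ (norm_nonneg z) hz1 (by omega)
  have hwne1 : (1 : ℂ) - w ≠ 0 := by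
    intro h
    have : w = 1 := by linear_combination -h
    rw [this] at hw1; simp at hw1
  -- Part 1
  have hD : z ^ P - z ^ (-P) ≠ 0 := by
    intro h
    have h' : z ^ P = z ^ (-P) := sub_eq_zero.mp h
    have hw1' : w = 1 := by
      calc w = z ^ P * z ^ P := by rw [hwdef, two_mul, zpow_add₀ hz0]
        _ = z ^ P * z ^ (-P) := by rw [← h']
        _ = 1 := by rw [← zpow_add₀ hz0]; simp
    rw [hw1'] at hw1; simp at hw1
  -- abbreviations
  set Q : Fin n → ℤ := fun j => ∏ i ∈ Finset.univ.erase j, p i with hQdef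
  set S : (Fin n → Bool) → ℤ := fun ε => ∑ j, (if ε j then (1:ℤ) else -1) * Q j with hSdef
  set c : (Fin n → Bool) → ℂ := fun ε => ∏ j, if ε j then (1:ℂ) else -1 with hcdef
  have hzpow_sum : ∀ (e : Fin n → ℤ), ∏ j, z ^ e j = z ^ (∑ j, e j) := by
    intro e
    induction (Finset.univ : Finset (Fin n)) using Finset.cons_induction with
    | empty => simp
    | cons a s ha ih => rw [Finset.prod_cons, Finset.sum_cons, ih, zpow_add₀ hz0]
  -- product expansion
  have hexpand : ∏ j, (z ^ Q j - z ^ (-Q j)) = ∑ ε : Fin n → Bool, c ε * z ^ S ε := by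
    have h1 : ∀ j, z ^ Q j - z ^ (-Q j)
        = ∑ b : Bool, (if b then (1:ℂ) else -1) * z ^ ((if b then (1:ℤ) else -1) * Q j) := by
      intro j
      rw [Fintype.sum_bool, if_pos rfl, if_pos rfl, if_neg (by simp), if_neg (by simp),
        one_mul, one_mul, neg_one_mul, neg_one_mul]
      ring
    calc ∏ j, (z ^ Q j - z ^ (-Q j))
        = ∏ j, ∑ b : Bool, (if b then (1:ℂ) else -1) * z ^ ((if b then (1:ℤ) else -1) * Q j) := by
          exact Finset.prod_congr rfl (fun j _ => h1 j)
      _ = ∑ ε : Fin n → Bool, ∏ j, (if ε j then (1:ℂ) else -1) * z ^ ((if ε j then (1:ℤ) else -1) * Q j) :=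
          Fintype.prod_sum _
      _ = ∑ ε : Fin n → Bool, c ε * z ^ S ε := by
          refine Finset.sum_congr rfl (fun ε _ => ?_)
          rw [Finset.prod_mul_distrib, hzpow_sum]
  -- constant A
  set A : ℂ := ∑ ε : Fin n → Bool, c ε * z ^ (P * ((n:ℤ) - 2) + S ε) with hAdef
  have hA : A = z ^ (P * ((n:ℤ) - 2)) * ∏ j, (z ^ Q j - z ^ (-Q j)) := by
    rw [hexpand, Finset.mul_sum, hAdef]
    refine Finset.sum_congr rfl (fun ε _ => ?_)
    rw [zpow_add₀ hz0]; ring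
  -- term rewriting
  have hterm : ∀ r : ℕ,
      (∑ ε : Fin n → Bool,
        (-1 : ℂ) ^ n * ((r + (n - 3)).choose r : ℂ) * c ε *
          z ^ (2 * P * (r : ℤ) + P * ((n : ℤ) - 2) + S ε))
      = ((-1 : ℂ) ^ n * A) * (((r + (n - 3)).choose (n-3) : ℂ) * w ^ r) := by
    intro r
    have hch : (r + (n - 3)).choose r = (r + (n - 3)).choose (n - 3) := by
      rw [← Nat.choose_symm (Nat.le_add_right r (n - 3))]
      congr 1
      omega
    rw [hAdef, Finset.mul_sum, Finset.sum_mul]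
    refine Finset.sum_congr rfl (fun ε _ => ?_)
    have he : z ^ (2 * P * (r : ℤ) + P * ((n : ℤ) - 2) + S ε)
        = w ^ r * z ^ (P * ((n : ℤ) - 2) + S ε) := by
      rw [add_assoc, zpow_add₀ hz0, hwdef, ← zpow_natCast (z ^ (2*P)), ← zpow_mul]
    rw [he, hch]
    ring
  -- the binomial series
  have hbin : HasSum (fun r : ℕ => ((r + (n - 3)).choose (n - 3) : ℂ) * w ^ r)
      (1 / (1 - w) ^ (n - 2)) := by
    have h32 : n - 3 + 1 = n - 2 := by omega
    rw [← h32]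
    exact hasSum_choose_mul_geometric_of_norm_lt_one (n - 3) hw1
  have hmain : HasSum (fun r : ℕ =>
      ∑ ε : Fin n → Bool,
        (-1 : ℂ) ^ n * ((r + (n - 3)).choose r : ℂ) * c ε *
          z ^ (2 * P * (r : ℤ) + P * ((n : ℤ) - 2) + S ε))
      (((-1 : ℂ) ^ n * A) * (1 / (1 - w) ^ (n - 2))) := by
    have h := hbin.mul_left ((-1 : ℂ) ^ n * A)
    have hfun : (fun r : ℕ =>
        ∑ ε : Fin n → Bool,
          (-1 : ℂ) ^ n * ((r + (n - 3)).choose r : ℂ) * c ε *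
            z ^ (2 * P * (r : ℤ) + P * ((n : ℤ) - 2) + S ε))
        = fun r : ℕ => ((-1 : ℂ) ^ n * A) * (((r + (n - 3)).choose (n-3) : ℂ) * w ^ r) :=
      funext hterm
    rw [hfun]
    exact h
  -- identify the value
  have hzPe : z ^ (P * ((n:ℤ) - 2)) ≠ 0 := zpow_ne_zero _ hz0
  have hDval : z ^ P - z ^ (-P) = -z ^ (-P) * (1 - w) := by
    have h : z ^ (-P) * z ^ (2 * P) = z ^ P := by
      rw [← zpow_add₀ hz0]; congr 1; ring
    rw [hwdef]
    linear_combination -h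
  have hDpow : (z ^ P - z ^ (-P)) ^ (n - 2)
      = (-1 : ℂ) ^ n * (z ^ (P * ((n:ℤ) - 2)))⁻¹ * (1 - w) ^ (n - 2) := by
    rw [hDval, mul_pow, neg_pow]
    have h1 : (z ^ (-P)) ^ (n - 2) = (z ^ (P * ((n:ℤ) - 2)))⁻¹ := by
      rw [← zpow_neg, ← zpow_natCast (z ^ (-P)), ← zpow_mul]
      congr 1
      have hc : ((n - 2 : ℕ) : ℤ) = (n : ℤ) - 2 := by omega
      rw [hc]
      try ring
    have h2 : (-1 : ℂ) ^ (n - 2) = (-1 : ℂ) ^ n := by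
      conv_rhs => rw [show n = n - 2 + 2 by omega]
      rw [pow_add]; ring
    rw [h1, h2]
    try ring
  have hval : ((-1 : ℂ) ^ n * A) * (1 / (1 - w) ^ (n - 2))
      = (∏ j, (z ^ Q j - z ^ (-Q j))) / (z ^ P - z ^ (-P)) ^ (n - 2) := by
    have hne1 : (1 - w) ^ (n - 2) ≠ 0 := pow_ne_zero _ hwne1
    set N : ℂ := ∏ j, (z ^ Q j - z ^ (-Q j)) with hNdef
    rw [hDpow, hA]
    rcases Nat.even_or_odd n with hpar | hpar
    · rw [hpar.neg_one_pow]
      field_simp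
    · rw [hpar.neg_one_pow]
      field_simp
  -- summability of norms
  have hsummR : Summable (fun r : ℕ => ((r + (n - 3)).choose (n - 3) : ℝ) * ‖w‖ ^ r) :=
    (summable_choose_mul_geometric_of_norm_lt_one (n - 3)
      (by rwa [Real.norm_eq_abs, abs_norm])).congr (fun r => rfl)
  have hsumm : Summable (fun r : ℕ =>
      ‖∑ ε : Fin n → Bool,
        (-1 : ℂ) ^ n * ((r + (n - 3)).choose r : ℂ) * c ε *
          z ^ (2 * P * (r : ℤ) + P * ((n : ℤ) - 2) + S ε)‖) := by
    apply Summable.congr ((hsummR.mul_left ‖(-1 : ℂ) ^ n * A‖))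
    intro r
    simp [hterm r, norm_mul, norm_pow]
  exact ⟨hD, hsumm, hval ▸ hmain⟩
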